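/- In any execution of the MD2IS algorithm under a serial central daemon, once a vertex v executes rule R1 (entering S), v is never enabled again: neither R1 (since its state is In) nor R2 (since all vertices at distance ≤ 2 remain Out and cannot become In). -/

import Mathlib

variable {V : Type*} [Fintype V] [DecidableEq V]

/-- `S` is a distance-2 independent set: any two distinct vertices of `S`
are at graph distance strictly greater than 2. -/
def Dist2Indep (G : SimpleGraph V) (S : Set V) : Prop :=
  ∀ u ∈ S, ∀ v ∈ S, u ≠ v → 2 < G.edist u v

/-- `exp G s u` counts the neighbors of `u` whose state is `In` (`true`). -/
def expIn (G : SimpleGraph V) [DecidableRel G.Adj] (s : V → Bool) (u : V) : ℕ :=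
  ((G.neighborFinset u).filter (fun w => s w = true)).card

/-- Guard of rule R1 at `v`: `v` is Out and every neighbor is Out with exp 0. -/
def R1guard (G : SimpleGraph V) [DecidableRel G.Adj] (s : V → Bool) (v : V) : Prop :=
  s v = false ∧ ∀ u ∈ G.neighborSet v, s u = false ∧ expIn G s u = 0

/-- Guard of rule R2 at `v`: `v` is In and some neighbor is In or has exp > 1. -/
def R2guard (G : SimpleGraph V) [DecidableRel G.Adj] (s : V → Bool) (v : V) : Prop :=
  s v = true ∧ ∃ u ∈ G.neighborSet v, s u = true ∨ 1 < expIn G s u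
/-- One move of the algorithm: vertex `v` fires R1 (becoming In) or R2 (becoming Out). -/
def Step (G : SimpleGraph V) [DecidableRel G.Adj] (s s' : V → Bool) (v : V) : Prop :=
  (R1guard G s v ∧ s' = Function.update s v true) ∨
  (R2guard G s v ∧ s' = Function.update s v false)

/-- Invariant after `v` has fired R1: `v` is In, all neighbors are Out, and
all vertices at distance two (other than `v`) are Out. -/
def MDInv (G : SimpleGraph V) (s : V → Bool) (v : V) : Prop :=
  s v = true ∧ ∀ u ∈ G.neighborSet v, s u = false ∧
    ∀ w ∈ G.neighborSet u, w ≠ v → s w = false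

lemma expIn_le_one (G : SimpleGraph V) [DecidableRel G.Adj] {s : V → Bool} {v : V}
    (h : MDInv G s v) {u : V} (hu : u ∈ G.neighborSet v) : expIn G s u ≤ 1 := by
  have hsub : (G.neighborFinset u).filter (fun w => s w = true) ⊆ {v} := by
    intro w hw
    simp only [Finset.mem_filter, SimpleGraph.mem_neighborFinset] at hw
    simp only [Finset.mem_singleton]
    by_contra hne
    have := (h.2 u hu).2 w (by simpa using hw.1) hne
    simp [this] at hw
  calc expIn G s u ≤ ({v} : Finset V).card := Finset.card_le_card hsub
    _ = 1 := Finset.card_singleton v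

lemma mdinv_not_guards (G : SimpleGraph V) [DecidableRel G.Adj] {s : V → Bool} {v : V}
    (h : MDInv G s v) : ¬ R1guard G s v ∧ ¬ R2guard G s v := by
  constructor
  · intro h1
    have h2 := h.1
    rw [h1.1] at h2
    exact Bool.noConfusion h2
  · rintro ⟨-, u, hu, hcase⟩
    rcases hcase with h1 | h1
    · have h2 := (h.2 u hu).1
      rw [h1] at h2
      exact Bool.noConfusion h2
    · exact absurd (expIn_le_one G h hu) (by omega)

lemma mdinv_init (G : SimpleGraph V) [DecidableRel G.Adj] {s : V → Bool} {v : V}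
    (h : R1guard G s v) : MDInv G (Function.update s v true) v := by
  refine ⟨Function.update_self v true s, ?_⟩
  intro u hu
  have huv : u ≠ v := fun h' => G.irrefl (h' ▸ hu)
  have hexp := (h.2 u hu).2
  have hall : ∀ w ∈ G.neighborSet u, s w = false := by
    intro w hw
    have : (G.neighborFinset u).filter (fun w => s w = true) = ∅ :=
      Finset.card_eq_zero.mp hexp
    by_contra hne
    have hwT : s w = true := by cases hsw : s w with
      | false => exact absurd hsw hne
      | true => rfl
    have : w ∈ (G.neighborFinset u).filter (fun w => s w = true) := by
      simp only [Finset.mem_filter, SimpleGraph.mem_neighborFinset, SimpleGraph.mem_neighborSet] at *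
      exact ⟨hw, hwT⟩
    simp_all
  refine ⟨?_, ?_⟩
  · rw [Function.update_of_ne huv]; exact (h.2 u hu).1
  · intro w hw hwv
    rw [Function.update_of_ne hwv]; exact hall w hw

lemma mdinv_step (G : SimpleGraph V) [DecidableRel G.Adj] {s s' : V → Bool} {v x : V}
    (h : MDInv G s v) (hs : Step G s s' x) : MDInv G s' v := by
  rcases hs with ⟨hg, rfl⟩ | ⟨hg, rfl⟩
  · -- R1 at x
    have hxv : x ≠ v := by
      rintro rfl
      have h2 := hg.1
      rw [h.1] at h2
      exact Bool.noConfusion h2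
    have hxN : x ∉ G.neighborSet v := by
      intro hx
      have := (hg.2 v (G.adj_symm hx)).1
      rw [h.1] at this; simp at this
    have hxN2 : ∀ u ∈ G.neighborSet v, x ∉ G.neighborSet u := by
      intro u hu hx
      have hexp := (hg.2 u (G.adj_symm hx)).2
      have hvmem : v ∈ (G.neighborFinset u).filter (fun w => s w = true) := by
        simp [SimpleGraph.mem_neighborFinset, h.1, G.adj_symm hu]
      have := Finset.card_eq_zero.mp hexp
      simp_all
    refine ⟨by rw [Function.update_of_ne (Ne.symm hxv)]; exact h.1, ?_⟩
    intro u hu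
    have hux : u ≠ x := fun h' => hxN (h' ▸ hu)
    refine ⟨by rw [Function.update_of_ne hux]; exact (h.2 u hu).1, ?_⟩
    intro w hw hwv
    have hwx : w ≠ x := fun h' => hxN2 u hu (h' ▸ hw)
    rw [Function.update_of_ne hwx]; exact (h.2 u hu).2 w hw hwv
  · -- R2 at x
    have hxv : x ≠ v := by
      rintro rfl
      rcases hg.2 with ⟨u, hu, hc | hc⟩
      · have h2 := (h.2 u hu).1
        rw [hc] at h2
        exact Bool.noConfusion h2
      · exact absurd (expIn_le_one G h hu) (by omega)
    refine ⟨by rw [Function.update_of_ne (Ne.symm hxv)]; exact h.1, ?_⟩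
    intro u hu
    refine ⟨?_, ?_⟩
    · by_cases hux : u = x
      · subst hux; simp
      · rw [Function.update_of_ne hux]; exact (h.2 u hu).1
    · intro w hw hwv
      by_cases hwx : w = x
      · subst hwx; simp
      · rw [Function.update_of_ne hwx]; exact (h.2 u hu).2 w hw hwv

theorem stmt_8 (G : SimpleGraph V) [DecidableRel G.Adj]
    (T : ℕ) (c : ℕ → V → Bool) (mv : ℕ → V)
    (hstep : ∀ i < T, Step G (c i) (c (i + 1)) (mv i))
    (i : ℕ) (hi : i < T) (v : V) (hv : mv i = v)
    (hR1 : R1guard G (c i) v ∧ c (i + 1) = Function.update (c i) v true) :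
    ∀ j, i < j → j ≤ T → ¬ R1guard G (c j) v ∧ ¬ R2guard G (c j) v := by
  subst hv
  have key : ∀ j, i + 1 ≤ j → j ≤ T → MDInv G (c j) (mv i) := by
    intro j hj
    induction j, hj using Nat.le_induction with
    | base => intro _; rw [hR1.2]; exact mdinv_init G hR1.1
    | succ n hn ih =>
      intro hnT
      exact mdinv_step G (ih (by omega)) (hstep n (by omega))
  intro j hj hjT
  exact mdinv_not_guards G (key j hj hjT)
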